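/- Let g be a finite-dimensional complex Lie algebra with a nondegenerate symmetric invariant bilinear form ⟨·,·⟩, dual bases X¹,…,X^d and X₁,…,X_d, a finite-dimensional representation π : g → End V, and G = Σ_{i=1}^d π(Xⁱ) ⊗ X_i ∈ End V ⊗ U(g). Then for every k ≥ 1 the element tr G^k (trace over the End V factor) belongs to the center of the universal enveloping algebra U(g). -/

import Mathlib

noncomputable section

set_option maxHeartbeats 1000000
set_option synthInstance.maxHeartbeats 1000000

open scoped TensorProduct

attribute [local instance] LieRing.ofAssociativeRing

/-- `G = Σᵢ π(Xⁱ) ⊗ Xᵢ ∈ End V ⊗ U(g)`. -/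
def Ggen (L : Type) [LieRing L] [LieAlgebra ℂ L]
    (V : Type) [AddCommGroup V] [Module ℂ V]
    (π : L →ₗ⁅ℂ⁆ Module.End ℂ V) (d : ℕ) (bX : Fin d → L) (Xlo : Fin d → L) :
    Module.End ℂ V ⊗[ℂ] UniversalEnvelopingAlgebra ℂ L :=
  ∑ i : Fin d, π (bX i) ⊗ₜ[ℂ] UniversalEnvelopingAlgebra.ι ℂ (Xlo i)

/-- The trace over the `End V` factor, `End V ⊗ U(g) → U(g)`. -/
def trFirst (L : Type) [LieRing L] [LieAlgebra ℂ L]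
    (V : Type) [AddCommGroup V] [Module ℂ V]
    (x : Module.End ℂ V ⊗[ℂ] UniversalEnvelopingAlgebra ℂ L) :
    UniversalEnvelopingAlgebra ℂ L :=
  TensorProduct.lid ℂ (UniversalEnvelopingAlgebra ℂ L)
    (LinearMap.rTensor (UniversalEnvelopingAlgebra ℂ L)
      ((LinearMap.trace ℂ V : Module.End ℂ V →ₗ[ℂ] ℂ)) x)

namespace TracePowersCentralAux

open UniversalEnvelopingAlgebra

section generation
variable (L : Type) [LieRing L] [LieAlgebra ℂ L]

lemma adjoin_range_iota_eq_top :
    Algebra.adjoin ℂ (Set.range (fun x : L => (ι ℂ x : UniversalEnvelopingAlgebra ℂ L))) = ⊤ := by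
  set S := Algebra.adjoin ℂ (Set.range (fun x : L => (ι ℂ x : UniversalEnvelopingAlgebra ℂ L))) with hS
  rw [eq_top_iff]
  intro u _
  let ι' : L →ₗ⁅ℂ⁆ S :=
    { toFun := fun x => ⟨ι ℂ x, Algebra.subset_adjoin ⟨x, rfl⟩⟩
      map_add' := fun x y => by ext; simp
      map_smul' := fun c x => by ext; simp
      map_lie' := fun {x y} => by
        ext
        simp [Ring.lie_def, LieHom.map_lie] }
  have key : S.val.comp (lift ℂ ι') = AlgHom.id ℂ (UniversalEnvelopingAlgebra ℂ L) := by
    apply hom_ext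
    ext x
    simp [ι', lift_ι_apply]
  have : u = S.val ((lift ℂ ι') u) := by
    conv_lhs => rw [← AlgHom.id_apply (R := ℂ) u, ← key]
    rfl
  rw [this]
  exact (lift ℂ ι' u).2

lemma mem_center_of_commutes_iota (x : UniversalEnvelopingAlgebra ℂ L)
    (h : ∀ Y : L, ι ℂ Y * x = x * ι ℂ Y) :
    x ∈ Subalgebra.center ℂ (UniversalEnvelopingAlgebra ℂ L) := by
  rw [Subalgebra.mem_center_iff]
  intro b
  have hle : Algebra.adjoin ℂ (Set.range (fun x : L => (ι ℂ x : UniversalEnvelopingAlgebra ℂ L)))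
      ≤ Subalgebra.centralizer ℂ {x} := by
    rw [Algebra.adjoin_le_iff]
    rintro _ ⟨Y, rfl⟩
    rw [SetLike.mem_coe, Subalgebra.mem_centralizer_iff]
    rintro g rfl
    exact (h Y).symm
  rw [adjoin_range_iota_eq_top] at hle
  have hb := hle (show b ∈ ⊤ from trivial)
  rw [Subalgebra.mem_centralizer_iff] at hb
  exact (hb x rfl).symm

end generation

section trace
variable (L : Type) [LieRing L] [LieAlgebra ℂ L]
  (V : Type) [AddCommGroup V] [Module ℂ V]

lemma trFirst_tmul (a : Module.End ℂ V) (u : UniversalEnvelopingAlgebra ℂ L) :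
    trFirst L V (a ⊗ₜ u) = LinearMap.trace ℂ V a • u := by
  simp [trFirst]

lemma trFirst_add (A B' : Module.End ℂ V ⊗[ℂ] UniversalEnvelopingAlgebra ℂ L) :
    trFirst L V (A + B') = trFirst L V A + trFirst L V B' := by
  simp [trFirst]

lemma trFirst_conj (a : Module.End ℂ V)
    (A : Module.End ℂ V ⊗[ℂ] UniversalEnvelopingAlgebra ℂ L) :
    trFirst L V ((a ⊗ₜ (1 : UniversalEnvelopingAlgebra ℂ L)) * A) =
      trFirst L V (A * (a ⊗ₜ (1 : UniversalEnvelopingAlgebra ℂ L))) := by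
  induction A using TensorProduct.induction_on with
  | zero => simp
  | tmul b u =>
      rw [Algebra.TensorProduct.tmul_mul_tmul, Algebra.TensorProduct.tmul_mul_tmul,
        one_mul, mul_one, trFirst_tmul, trFirst_tmul, LinearMap.trace_mul_comm]
  | add x y hx hy => rw [mul_add, add_mul, trFirst_add, trFirst_add, hx, hy]

lemma trFirst_one_tmul_mul (u : UniversalEnvelopingAlgebra ℂ L)
    (A : Module.End ℂ V ⊗[ℂ] UniversalEnvelopingAlgebra ℂ L) :
    trFirst L V (((1 : Module.End ℂ V) ⊗ₜ u) * A) = u * trFirst L V A := by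
  induction A using TensorProduct.induction_on with
  | zero => simp [trFirst]
  | tmul b v =>
      rw [Algebra.TensorProduct.tmul_mul_tmul, one_mul, trFirst_tmul, trFirst_tmul,
        mul_smul_comm]
  | add x y hx hy => rw [mul_add, trFirst_add, trFirst_add, hx, hy, mul_add]

lemma trFirst_mul_one_tmul (u : UniversalEnvelopingAlgebra ℂ L)
    (A : Module.End ℂ V ⊗[ℂ] UniversalEnvelopingAlgebra ℂ L) :
    trFirst L V (A * ((1 : Module.End ℂ V) ⊗ₜ u)) = trFirst L V A * u := by
  induction A using TensorProduct.induction_on with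
  | zero => simp [trFirst]
  | tmul b v =>
      rw [Algebra.TensorProduct.tmul_mul_tmul, mul_one, trFirst_tmul, trFirst_tmul,
        smul_mul_assoc]
  | add x y hx hy => rw [add_mul, trFirst_add, trFirst_add, hx, hy, add_mul]

end trace

end TracePowersCentralAux

open UniversalEnvelopingAlgebra TracePowersCentralAux in
/-- for a finite-dimensional complex Lie algebra `g` with a nondegenerate
symmetric invariant bilinear form, dual bases `X¹,…,X^d`, `X₁,…,X_d`, and a
finite-dimensional representation `π : g → End V`, all the elements `tr G^k`, `k ≥ 1`,
belong to the center of `U(g)`. -/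
theorem trace_powers_central
    (L : Type) [LieRing L] [LieAlgebra ℂ L] [Module.Finite ℂ L]
    (V : Type) [AddCommGroup V] [Module ℂ V] [Module.Finite ℂ V]
    (B : LinearMap.BilinForm ℂ L)
    (hsym : ∀ X Y : L, B X Y = B Y X)
    (hinv : ∀ X Y Z : L, B ⁅X, Y⁆ Z = B X ⁅Y, Z⁆)
    (hnd : B.Nondegenerate)
    (d : ℕ) (bX : Module.Basis (Fin d) ℂ L) (Xlo : Fin d → L)
    (hdual : ∀ i j, B (bX i) (Xlo j) = if i = j then 1 else 0)
    (π : L →ₗ⁅ℂ⁆ Module.End ℂ V) :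
    ∀ k : ℕ, 1 ≤ k →
      trFirst L V ((Ggen L V π d bX Xlo) ^ k) ∈
        Subalgebra.center ℂ (UniversalEnvelopingAlgebra ℂ L) := by
  -- expansion in dual bases
  have hBrep : ∀ (Z : L) (i : Fin d), B Z (Xlo i) = bX.repr Z i := by
    intro Z i
    conv_lhs => rw [← bX.sum_repr Z]
    simp [map_sum, LinearMap.sum_apply, map_smul, LinearMap.smul_apply, hdual,
      Finset.sum_ite_eq', smul_eq_mul, mul_ite, -Module.Basis.sum_repr]
  have hexpand1 : ∀ Z : L, Z = ∑ i, B Z (Xlo i) • bX i := by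
    intro Z
    conv_lhs => rw [← bX.sum_repr Z]
    exact Finset.sum_congr rfl fun i _ => by rw [hBrep]
  have hexpand2 : ∀ Z : L, Z = ∑ j, B (bX j) Z • Xlo j := by
    intro Z
    have hW : ∀ i, B (bX i) (Z - ∑ j, B (bX j) Z • Xlo j) = 0 := by
      intro i
      simp [map_sub, map_sum, map_smul, hdual, Finset.sum_ite_eq', smul_eq_mul, mul_ite]
    have hall : ∀ X : L, B X (Z - ∑ j, B (bX j) Z • Xlo j) = 0 := by
      intro X
      conv_lhs => rw [hexpand1 X]
      simp only [map_sum, LinearMap.sum_apply, map_smul, LinearMap.smul_apply]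
      rw [Finset.sum_congr rfl fun i _ => by rw [hW i]]
      simp
    have : Z - ∑ j, B (bX j) Z • Xlo j = 0 := by
      apply hnd.1
      intro n
      rw [hsym]
      exact hall n
    exact sub_eq_zero.mp this
  -- the key cancellation identity
  have hkey : ∀ Y : L,
      (∑ i, π (bX i) ⊗ₜ[ℂ] (ι ℂ ⁅Y, Xlo i⁆ : UniversalEnvelopingAlgebra ℂ L)) =
        - ∑ j, π ⁅Y, bX j⁆ ⊗ₜ[ℂ] (ι ℂ (Xlo j) : UniversalEnvelopingAlgebra ℂ L) := by
    intro Y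
    have h1 : ∀ i, (ι ℂ ⁅Y, Xlo i⁆ : UniversalEnvelopingAlgebra ℂ L) =
        ∑ j, (-(B ⁅Y, bX j⁆ (Xlo i))) • ι ℂ (Xlo j) := by
      intro i
      conv_lhs => rw [hexpand2 ⁅Y, Xlo i⁆, ← LieHom.coe_toLinearMap (ι ℂ)]
      rw [map_sum]
      refine Finset.sum_congr rfl fun j _ => ?_
      rw [map_smul, LieHom.coe_toLinearMap]
      congr 1
      rw [← hinv (bX j) Y (Xlo i), ← lie_skew, map_neg, LinearMap.neg_apply]
    calc ∑ i, π (bX i) ⊗ₜ[ℂ] (ι ℂ ⁅Y, Xlo i⁆ : UniversalEnvelopingAlgebra ℂ L)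
        = ∑ i, ∑ j, (-(B ⁅Y, bX j⁆ (Xlo i))) •
            (π (bX i) ⊗ₜ[ℂ] (ι ℂ (Xlo j) : UniversalEnvelopingAlgebra ℂ L)) := by
          refine Finset.sum_congr rfl fun i _ => ?_
          rw [h1 i, TensorProduct.tmul_sum]
          exact Finset.sum_congr rfl fun j _ => (TensorProduct.tmul_smul _ _ _)
      _ = ∑ j, ∑ i, (-(B ⁅Y, bX j⁆ (Xlo i))) •
            (π (bX i) ⊗ₜ[ℂ] (ι ℂ (Xlo j) : UniversalEnvelopingAlgebra ℂ L)) := Finset.sum_comm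
      _ = - ∑ j, π ⁅Y, bX j⁆ ⊗ₜ[ℂ] (ι ℂ (Xlo j) : UniversalEnvelopingAlgebra ℂ L) := by
          rw [← Finset.sum_neg_distrib]
          refine Finset.sum_congr rfl fun j _ => ?_
          have hthis : π ⁅Y, bX j⁆ ⊗ₜ[ℂ] (ι ℂ (Xlo j) : UniversalEnvelopingAlgebra ℂ L) =
              ∑ i, (B ⁅Y, bX j⁆ (Xlo i)) •
                (π (bX i) ⊗ₜ[ℂ] (ι ℂ (Xlo j) : UniversalEnvelopingAlgebra ℂ L)) := by
            conv_lhs => rw [hexpand1 ⁅Y, bX j⁆, ← LieHom.coe_toLinearMap π]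
            rw [map_sum, TensorProduct.sum_tmul]
            refine Finset.sum_congr rfl fun i _ => ?_
            rw [map_smul, ← TensorProduct.smul_tmul', LieHom.coe_toLinearMap]
          rw [hthis, ← Finset.sum_neg_distrib]
          refine Finset.sum_congr rfl fun x _ => ?_
          module
  -- G commutes with Δ(Y) = π(Y) ⊗ 1 + 1 ⊗ ι(Y)
  set G : Module.End ℂ V ⊗[ℂ] UniversalEnvelopingAlgebra ℂ L := Ggen L V π d bX Xlo with hG
  have hD : ∀ Y : L,
      ((π Y) ⊗ₜ (1 : UniversalEnvelopingAlgebra ℂ L) +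
        (1 : Module.End ℂ V) ⊗ₜ (ι ℂ Y)) * G =
      G * ((π Y) ⊗ₜ (1 : UniversalEnvelopingAlgebra ℂ L) +
        (1 : Module.End ℂ V) ⊗ₜ (ι ℂ Y)) := by
    intro Y
    rw [← sub_eq_zero]
    have hsub : ((π Y) ⊗ₜ (1 : UniversalEnvelopingAlgebra ℂ L) +
          (1 : Module.End ℂ V) ⊗ₜ (ι ℂ Y)) * G -
        G * ((π Y) ⊗ₜ (1 : UniversalEnvelopingAlgebra ℂ L) +
          (1 : Module.End ℂ V) ⊗ₜ (ι ℂ Y)) =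
        (∑ i, π ⁅Y, bX i⁆ ⊗ₜ[ℂ] (ι ℂ (Xlo i) : UniversalEnvelopingAlgebra ℂ L)) +
          ∑ i, π (bX i) ⊗ₜ[ℂ] (ι ℂ ⁅Y, Xlo i⁆ : UniversalEnvelopingAlgebra ℂ L) := by
      rw [hG, Ggen, Finset.mul_sum, Finset.sum_mul, ← Finset.sum_sub_distrib,
        ← Finset.sum_add_distrib]
      refine Finset.sum_congr rfl fun i _ => ?_
      simp only [add_mul, mul_add, Algebra.TensorProduct.tmul_mul_tmul, one_mul, mul_one]
      rw [LieHom.map_lie, LieHom.map_lie, Ring.lie_def, Ring.lie_def,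
        TensorProduct.sub_tmul, TensorProduct.tmul_sub]
      abel
    rw [hsub, hkey Y]
    simp
  -- conclude
  intro k _
  apply mem_center_of_commutes_iota
  intro Y
  have hc : ((π Y) ⊗ₜ (1 : UniversalEnvelopingAlgebra ℂ L) +
        (1 : Module.End ℂ V) ⊗ₜ (ι ℂ Y)) * G ^ k =
      G ^ k * ((π Y) ⊗ₜ (1 : UniversalEnvelopingAlgebra ℂ L) +
        (1 : Module.End ℂ V) ⊗ₜ (ι ℂ Y)) :=
    (Commute.pow_right (show Commute _ G from hD Y) k).eq
  have h2 : trFirst L V (((π Y) ⊗ₜ (1 : UniversalEnvelopingAlgebra ℂ L)) * G ^ k) +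
        ι ℂ Y * trFirst L V (G ^ k) =
      trFirst L V (G ^ k * ((π Y) ⊗ₜ (1 : UniversalEnvelopingAlgebra ℂ L))) +
        trFirst L V (G ^ k) * ι ℂ Y := by
    rw [← trFirst_one_tmul_mul, ← trFirst_mul_one_tmul, ← trFirst_add, ← trFirst_add,
      ← add_mul, ← mul_add, hc]
  rw [trFirst_conj] at h2
  exact add_left_cancel h2
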